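/- The map (g₁, g₂) ↦ ∇F_GM(g₁,g₂), extended by 0 when either argument is 0, is continuous on R^d × R^d; in particular ‖∇F_GM(g₁,g₂)‖ ≤ √(‖g₁‖·‖g₂‖) for all g₁, g₂. -/

import Mathlib

open scoped RealInnerProductSpace

open scoped Classical in
/-- `∇F_GM`, extended by `0` when either gradient vanishes, is continuous and
satisfies `‖∇F_GM(g₁,g₂)‖ ≤ √(‖g₁‖·‖g₂‖)`. -/
theorem mog_gm_continuous_and_bounded (d : ℕ)
    (GM : EuclideanSpace ℝ (Fin d) × EuclideanSpace ℝ (Fin d) → EuclideanSpace ℝ (Fin d))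
    (hGM : ∀ g₁ g₂ : EuclideanSpace ℝ (Fin d),
      GM (g₁, g₂) = if g₁ ≠ 0 ∧ g₂ ≠ 0 then
        (1/2 : ℝ) • (Real.sqrt (‖g₂‖ / ‖g₁‖) • g₁ + Real.sqrt (‖g₁‖ / ‖g₂‖) • g₂)
      else 0) :
    Continuous GM ∧
      ∀ g₁ g₂ : EuclideanSpace ℝ (Fin d), ‖GM (g₁, g₂)‖ ≤ Real.sqrt (‖g₁‖ * ‖g₂‖) := by
  have key : ∀ a b : ℝ, 0 < a → 0 < b →
      Real.sqrt (b / a) * a = Real.sqrt (a * b) := by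
    intro a b ha hb
    calc Real.sqrt (b / a) * a = Real.sqrt (b / a) * Real.sqrt (a * a) := by
          rw [Real.sqrt_mul_self ha.le]
      _ = Real.sqrt (b / a * (a * a)) :=
          (Real.sqrt_mul (div_nonneg hb.le ha.le) _).symm
      _ = Real.sqrt (a * b) := by rw [div_mul_eq_mul_div, mul_div_assoc]
                                  rw [mul_div_assoc, div_self ha.ne', mul_one, mul_comm]
  have hbound : ∀ g₁ g₂ : EuclideanSpace ℝ (Fin d),
      ‖GM (g₁, g₂)‖ ≤ Real.sqrt (‖g₁‖ * ‖g₂‖) := by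
    intro g₁ g₂
    rw [hGM]
    split_ifs with h
    · obtain ⟨h1, h2⟩ := h
      have n1 : (0:ℝ) < ‖g₁‖ := norm_pos_iff.mpr h1
      have n2 : (0:ℝ) < ‖g₂‖ := norm_pos_iff.mpr h2
      have e1 : Real.sqrt (‖g₂‖ / ‖g₁‖) * ‖g₁‖ = Real.sqrt (‖g₁‖ * ‖g₂‖) :=
        key _ _ n1 n2
      have e2 : Real.sqrt (‖g₁‖ / ‖g₂‖) * ‖g₂‖ = Real.sqrt (‖g₁‖ * ‖g₂‖) := by
        rw [key _ _ n2 n1, mul_comm]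
      calc ‖(1/2 : ℝ) • (Real.sqrt (‖g₂‖ / ‖g₁‖) • g₁ + Real.sqrt (‖g₁‖ / ‖g₂‖) • g₂)‖
          = (1/2 : ℝ) * ‖Real.sqrt (‖g₂‖ / ‖g₁‖) • g₁ + Real.sqrt (‖g₁‖ / ‖g₂‖) • g₂‖ := by
            rw [norm_smul]; norm_num
        _ ≤ (1/2 : ℝ) * (‖Real.sqrt (‖g₂‖ / ‖g₁‖) • g₁‖ + ‖Real.sqrt (‖g₁‖ / ‖g₂‖) • g₂‖) := by
            gcongr; exact norm_add_le _ _
        _ = (1/2 : ℝ) * (Real.sqrt (‖g₂‖ / ‖g₁‖) * ‖g₁‖ + Real.sqrt (‖g₁‖ / ‖g₂‖) * ‖g₂‖) := by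
            rw [norm_smul, norm_smul, Real.norm_eq_abs, Real.norm_eq_abs,
              abs_of_nonneg (Real.sqrt_nonneg _), abs_of_nonneg (Real.sqrt_nonneg _)]
        _ = Real.sqrt (‖g₁‖ * ‖g₂‖) := by rw [e1, e2]; ring
    · simp; positivity
  refine ⟨?_, hbound⟩
  rw [continuous_iff_continuousAt]
  rintro ⟨a, b⟩
  by_cases h : a ≠ 0 ∧ b ≠ 0
  · have hopen : IsOpen {p : EuclideanSpace ℝ (Fin d) × EuclideanSpace ℝ (Fin d) |
        p.1 ≠ 0 ∧ p.2 ≠ 0} := by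
      exact ((isOpen_compl_singleton.preimage continuous_fst).inter
        (isOpen_compl_singleton.preimage continuous_snd))
    have hev : ∀ᶠ p : EuclideanSpace ℝ (Fin d) × EuclideanSpace ℝ (Fin d) in nhds (a, b),
        GM p = (1/2 : ℝ) • (Real.sqrt (‖p.2‖ / ‖p.1‖) • p.1 +
          Real.sqrt (‖p.1‖ / ‖p.2‖) • p.2) := by
      filter_upwards [hopen.mem_nhds h] with p hp
      rw [show p = (p.1, p.2) from rfl, hGM, if_pos hp]
    have c1 : ContinuousAt (fun p : EuclideanSpace ℝ (Fin d) × EuclideanSpace ℝ (Fin d) =>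
        Real.sqrt (‖p.2‖ / ‖p.1‖)) (a, b) :=
      Real.continuous_sqrt.continuousAt.comp
        ((continuousAt_snd.norm).div (continuousAt_fst.norm) (norm_ne_zero_iff.mpr h.1))
    have c2 : ContinuousAt (fun p : EuclideanSpace ℝ (Fin d) × EuclideanSpace ℝ (Fin d) =>
        Real.sqrt (‖p.1‖ / ‖p.2‖)) (a, b) :=
      Real.continuous_sqrt.continuousAt.comp
        ((continuousAt_fst.norm).div (continuousAt_snd.norm) (norm_ne_zero_iff.mpr h.2))
    have cform : ContinuousAt (fun p : EuclideanSpace ℝ (Fin d) × EuclideanSpace ℝ (Fin d) =>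
        (1/2 : ℝ) • (Real.sqrt (‖p.2‖ / ‖p.1‖) • p.1 +
          Real.sqrt (‖p.1‖ / ‖p.2‖) • p.2)) (a, b) :=
      ((show ContinuousAt (fun _ : EuclideanSpace ℝ (Fin d) × EuclideanSpace ℝ (Fin d) =>
          (1/2 : ℝ)) (a, b) from continuousAt_const).smul ((c1.smul continuousAt_fst).add (c2.smul continuousAt_snd)))
    exact cform.congr (Filter.EventuallyEq.symm hev)
  · have hz : GM (a, b) = 0 := by rw [hGM, if_neg h]
    have hab : ‖a‖ * ‖b‖ = 0 := by
      rcases not_and_or.mp h with h' | h' <;> simp [not_not.mp h']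
    have htend : Filter.Tendsto
        (fun p : EuclideanSpace ℝ (Fin d) × EuclideanSpace ℝ (Fin d) =>
          Real.sqrt (‖p.1‖ * ‖p.2‖)) (nhds (a, b)) (nhds 0) := by
      have : Continuous (fun p : EuclideanSpace ℝ (Fin d) × EuclideanSpace ℝ (Fin d) =>
          Real.sqrt (‖p.1‖ * ‖p.2‖)) :=
        Real.continuous_sqrt.comp (continuous_fst.norm.mul continuous_snd.norm)
      have h0 := this.continuousAt (x := (a, b))
      rwa [ContinuousAt, hab, Real.sqrt_zero] at h0
    have : Filter.Tendsto GM (nhds (a, b)) (nhds 0) :=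
      squeeze_zero_norm (fun p => hbound p.1 p.2) htend
    rw [ContinuousAt, hz]
    exact this
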